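/- Let n ≥ 2. The set of matrices A ∈ ℂ^{n×n} such that either the submatrix A₁ (deleting the first row and column) is derogatory, or the vector (a_{2,1},…,a_{n,1}) is not a cyclic vector of A₁, has Lebesgue measure zero in ℂ^{n×n} ≅ ℝ^{2n²}. -/
import Mathlib

open Matrix MeasureTheory

/-- `v` is a cyclic vector of `X`: the iterates `v, Xv, X²v, …` span the whole space. -/
def IsCyclicVec {m : ℕ} (X : Matrix (Fin m) (Fin m) ℂ) (v : Fin m → ℂ) : Prop :=
  Submodule.span ℂ (Set.range fun k : ℕ => (X ^ k) *ᵥ v) = ⊤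

open MvPolynomial in
lemma mv_null : ∀ (m : ℕ) (f : MvPolynomial (Fin m) ℂ), f ≠ 0 →
    volume {x : Fin m → ℂ | eval x f = 0} = 0 := by
  intro m
  induction m with
  | zero =>
    intro f hf
    convert measure_empty (μ := volume)
    ext x
    obtain ⟨c, rfl⟩ := C_surjective (Fin 0) f
    simp only [Set.mem_setOf_eq, eval_C, Set.mem_empty_iff_false, iff_false]
    exact fun h => hf (by rw [h]; simp)
  | succ m ih =>
    intro f hf
    set q : Polynomial (MvPolynomial (Fin m) ℂ) := finSuccEquiv ℂ m f with hq
    have hq0 : q ≠ 0 := fun h => hf (by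
      have := (finSuccEquiv ℂ m).injective (a₁ := f) (a₂ := 0) (by simpa [hq] using h)
      simpa using this)
    set e := MeasurableEquiv.piFinSuccAbove (fun _ : Fin (m+1) => ℂ) 0 with he
    have hmp : MeasurePreserving e volume volume :=
      volume_preserving_piFinSuccAbove (fun _ : Fin (m+1) => ℂ) 0
    set T : Set (ℂ × (Fin m → ℂ)) := {p | eval (Fin.cons p.1 p.2) f = 0} with hT
    have hTmeas : MeasurableSet T := by
      have hcont : Continuous fun p : ℂ × (Fin m → ℂ) => eval (Fin.cons p.1 p.2) f := by
        apply (MvPolynomial.continuous_eval f).comp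
        refine continuous_pi fun i => ?_
        refine Fin.cases ?_ ?_ i
        · exact continuous_fst
        · intro j; exact (continuous_apply j).comp continuous_snd
      exact (isClosed_singleton.preimage hcont).measurableSet
    have key : ∀ x : Fin (m+1) → ℂ, Fin.cons (e x).1 (e x).2 = x := fun x => by
      simp [he, MeasurableEquiv.piFinSuccAbove, Fin.insertNthEquiv, Fin.removeNth_zero]
    have hset : {x : Fin (m+1) → ℂ | eval x f = 0} = e ⁻¹' T := by
      ext x
      simp only [Set.mem_setOf_eq, Set.mem_preimage, hT]
      rw [key x]
    rw [hset, hmp.measure_preimage hTmeas.nullMeasurableSet]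
    rw [show (volume : Measure (ℂ × (Fin m → ℂ))) = (volume : Measure ℂ).prod volume from rfl]
    rw [MeasureTheory.Measure.measure_prod_null hTmeas]
    have hBfin : Set.Finite {y : ℂ | Polynomial.eval (MvPolynomial.C y) q = 0} := by
      have h1 : Set.Finite {s : MvPolynomial (Fin m) ℂ | Polynomial.IsRoot q s} :=
        Polynomial.finite_setOf_isRoot hq0
      have : {y : ℂ | Polynomial.eval (MvPolynomial.C y) q = 0} =
          (fun y : ℂ => (MvPolynomial.C y : MvPolynomial (Fin m) ℂ)) ⁻¹'
            {s | Polynomial.IsRoot q s} := rfl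
      rw [this]
      exact Set.Finite.preimage (Set.injOn_of_injective (MvPolynomial.C_injective _ _)) h1
    have hBnull : volume {y : ℂ | Polynomial.eval (MvPolynomial.C y) q = 0} = 0 :=
      hBfin.measure_zero _
    filter_upwards [compl_mem_ae_iff.mpr hBnull] with y hy
    simp only [Pi.zero_apply]
    simp only [Set.mem_compl_iff, Set.mem_setOf_eq] at hy
    have hslice : Prod.mk y ⁻¹' T =
        {s : Fin m → ℂ | eval s (Polynomial.eval (MvPolynomial.C y) q) = 0} := by
      ext s
      simp only [Set.mem_preimage, hT, Set.mem_setOf_eq]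
      rw [eval_eq_eval_mv_eval' s y f]
      rw [Polynomial.eval_map]
      have := Polynomial.eval₂_at_apply (eval s : MvPolynomial (Fin m) ℂ →+* ℂ)
        (MvPolynomial.C y) (p := q)
      simp only [eval_C] at this
      rw [this]
    rw [hslice]
    exact ih _ hy

open MvPolynomial in
lemma mv_null' {σ : Type*} [Fintype σ] [MeasurableSpace σ]
    (f : MvPolynomial σ ℂ) (hf : f ≠ 0) :
    volume {x : σ → ℂ | eval x f = 0} = 0 := by
  classical
  let e : Fin (Fintype.card σ) ≃ σ := (Fintype.equivFin σ).symm
  let g := MeasurableEquiv.piCongrLeft (fun _ : σ => ℂ) e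
  have hmp : MeasurePreserving g volume volume :=
    volume_measurePreserving_piCongrLeft (fun _ : σ => ℂ) e
  have hSmeas : MeasurableSet {x : σ → ℂ | eval x f = 0} :=
    (isClosed_singleton.preimage (MvPolynomial.continuous_eval f)).measurableSet
  rw [← hmp.measure_preimage hSmeas.nullMeasurableSet]
  have hgy : ∀ (y : Fin (Fintype.card σ) → ℂ) (s : σ), g y s = y (e.symm s) := by
    intro y s
    conv_lhs => rw [← e.apply_symm_apply s]
    exact MeasurableEquiv.piCongrLeft_apply_apply (β := fun _ : σ => ℂ) e y (e.symm s)
  have hpre : g ⁻¹' {x : σ → ℂ | eval x f = 0} =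
      {y : Fin (Fintype.card σ) → ℂ | eval y (rename e.symm f) = 0} := by
    ext y
    simp only [Set.mem_preimage, Set.mem_setOf_eq, eval_rename]
    have : g y = y ∘ e.symm := funext fun s => hgy y s
    rw [this]
  rw [hpre]
  exact mv_null _ _ (fun h => hf (by
    have := (rename_injective (R := ℂ) e.symm e.symm.injective) (a₁ := f) (a₂ := 0)
      (by simpa using h)
    simpa using this))

lemma curry_mp (b : ℕ) : ∀ (a : ℕ), MeasurePreserving
    (fun (A : Fin a → Fin b → ℂ) (p : Fin a × Fin b) => A p.1 p.2)
    volume volume := by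
  intro a
  induction a with
  | zero =>
    refine ⟨measurable_pi_lambda _ fun p => isEmptyElim p.1, ?_⟩
    rw [show (volume : Measure (Fin 0 → Fin b → ℂ)) = Measure.dirac isEmptyElim from
      Measure.pi_of_empty _,
      Measure.map_dirac' (measurable_pi_lambda _ fun p => isEmptyElim p.1),
      show (volume : Measure (Fin 0 × Fin b → ℂ)) = Measure.dirac isEmptyElim from
      Measure.pi_of_empty _]
    congr 1
    exact Subsingleton.elim _ _
  | succ a ih =>
    let e1 := MeasurableEquiv.piFinSuccAbove (fun _ : Fin (a+1) => (Fin b → ℂ)) 0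
    have h1 : MeasurePreserving e1 volume volume :=
      volume_preserving_piFinSuccAbove (fun _ : Fin (a+1) => (Fin b → ℂ)) 0
    have h2 : MeasurePreserving
        (Prod.map (id : (Fin b → ℂ) → (Fin b → ℂ))
          (fun (A : Fin a → Fin b → ℂ) (p : Fin a × Fin b) => A p.1 p.2))
        volume volume :=
      (MeasurePreserving.id volume).prod ih
    let e3 := (MeasurableEquiv.sumPiEquivProdPi (fun _ : Fin b ⊕ (Fin a × Fin b) => ℂ)).symm
    have h3 : MeasurePreserving e3 volume volume :=
      volume_measurePreserving_sumPiEquivProdPi_symm (fun _ => ℂ)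
    let gE : (Fin b ⊕ (Fin a × Fin b)) ≃ (Fin (a+1) × Fin b) :=
      { toFun := Sum.elim (fun j => ((0 : Fin (a+1)), j)) (fun q => (q.1.succ, q.2))
        invFun := fun p => Fin.cases (Sum.inl p.2) (fun i' => Sum.inr (i', p.2)) p.1
        left_inv := by rintro (j | ⟨i, j⟩) <;> simp
        right_inv := by
          rintro ⟨i, j⟩
          refine Fin.cases ?_ (fun i' => ?_) i <;> simp }
    let e4 := MeasurableEquiv.piCongrLeft (fun _ : Fin (a+1) × Fin b => ℂ) gE
    have h4 : MeasurePreserving e4 volume volume :=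
      volume_measurePreserving_piCongrLeft (fun _ => ℂ) gE
    have hcomp := ((h4.comp h3).comp h2).comp h1
    have hfun : (fun (A : Fin (a+1) → Fin b → ℂ) (p : Fin (a+1) × Fin b) => A p.1 p.2) =
        (⇑e4 ∘ ⇑e3 ∘ (Prod.map (id : (Fin b → ℂ) → (Fin b → ℂ))
          (fun (A : Fin a → Fin b → ℂ) (p : Fin a × Fin b) => A p.1 p.2)) ∘ ⇑e1) := by
      funext A
      funext p
      obtain ⟨i, j⟩ := p
      have he1 : e1 A = (A 0, fun i' : Fin a => A i'.succ) := by
        simp [e1, MeasurableEquiv.piFinSuccAbove, Fin.insertNthEquiv, Fin.removeNth_zero]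
        rfl
      refine Fin.cases ?_ (fun i' => ?_) i
      · have : ((0 : Fin (a+1)), j) = gE (Sum.inl j) := rfl
        rw [this]
        simp only [Function.comp_apply]
        rw [MeasurableEquiv.piCongrLeft_apply_apply]
        rw [he1]
        rfl
      · have : ((i'.succ : Fin (a+1)), j) = gE (Sum.inr (i', j)) := rfl
        rw [this]
        simp only [Function.comp_apply]
        rw [MeasurableEquiv.piCongrLeft_apply_apply]
        rw [he1]
        rfl
    rw [hfun]
    exact hcomp

open MvPolynomial in
lemma grid_null (a b : ℕ) (f : MvPolynomial (Fin a × Fin b) ℂ) (hf : f ≠ 0) :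
    volume {A : Fin a → Fin b → ℂ | eval (fun p => A p.1 p.2) f = 0} = 0 := by
  have hmp := curry_mp b a
  have hSmeas : MeasurableSet {x : Fin a × Fin b → ℂ | eval x f = 0} :=
    (isClosed_singleton.preimage (MvPolynomial.continuous_eval f)).measurableSet
  have : {A : Fin a → Fin b → ℂ | eval (fun p => A p.1 p.2) f = 0} =
      (fun (A : Fin a → Fin b → ℂ) (p : Fin a × Fin b) => A p.1 p.2) ⁻¹'
        {x : Fin a × Fin b → ℂ | eval x f = 0} := rfl
  rw [this, hmp.measure_preimage hSmeas.nullMeasurableSet]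
  exact mv_null' f hf

lemma det_ne_zero_cyclic {m : ℕ} (X : Matrix (Fin m) (Fin m) ℂ) (v : Fin m → ℂ)
    (h : (Matrix.of fun i k : Fin m => ((X ^ (k : ℕ)) *ᵥ v) i).det ≠ 0) :
    IsCyclicVec X v := by
  have hunit : IsUnit (Matrix.of fun i k : Fin m => ((X ^ (k : ℕ)) *ᵥ v) i).det :=
    isUnit_iff_ne_zero.mpr h
  rw [IsCyclicVec, eq_top_iff]
  rintro w -
  obtain ⟨c, hKc⟩ : ∃ c, (Matrix.of fun i k : Fin m => ((X ^ (k : ℕ)) *ᵥ v) i) *ᵥ c = w :=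
    ⟨(Matrix.of fun i k : Fin m => ((X ^ (k : ℕ)) *ᵥ v) i)⁻¹ *ᵥ w, by
      rw [Matrix.mulVec_mulVec, Matrix.mul_nonsing_inv _ hunit, Matrix.one_mulVec]⟩
  have hw : w = ∑ k : Fin m, c k • ((X ^ (k : ℕ)) *ᵥ v) := by
    rw [← hKc]
    funext i
    simp only [Matrix.mulVec, dotProduct, Matrix.of_apply, Finset.sum_apply,
      Pi.smul_apply, smul_eq_mul]
    exact Finset.sum_congr rfl fun k _ => mul_comm _ _
  rw [hw]
  exact Submodule.sum_mem _ fun k _ => Submodule.smul_mem _ _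
    (Submodule.subset_span ⟨(k : ℕ), rfl⟩)

/-- The set of `n × n` complex matrices `A` such that the lower-right submatrix `A₁`
(obtained by deleting the first row and column) is derogatory, or the first-column
vector `(a_{2,1},…,a_{n,1})` is not a cyclic vector of `A₁`, has Lebesgue measure zero. -/
theorem stmt3 (n : ℕ) :
    volume {A : Fin (n+2) → Fin (n+2) → ℂ |
      ¬ (∃ v : Fin (n+1) → ℂ,
          IsCyclicVec (Matrix.of fun i j : Fin (n+1) => A i.succ j.succ) v) ∨
      ¬ IsCyclicVec (Matrix.of fun i j : Fin (n+1) => A i.succ j.succ)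
          (fun i => A i.succ 0)} = 0 := by
  classical
  set σ := (Fin (n+2) × Fin (n+2))
  set Xp : Matrix (Fin (n+1)) (Fin (n+1)) (MvPolynomial σ ℂ) :=
    Matrix.of fun i j => MvPolynomial.X (i.succ, j.succ) with hXp
  set vp : Fin (n+1) → MvPolynomial σ ℂ := fun i => MvPolynomial.X (i.succ, 0) with hvp
  set P : MvPolynomial σ ℂ :=
    (Matrix.of fun i k : Fin (n+1) => ((Xp ^ (k : ℕ)) *ᵥ vp) i).det with hP
  -- evaluation lemma
  have hevalP : ∀ A : Fin (n+2) → Fin (n+2) → ℂ,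
      MvPolynomial.eval (fun p : σ => A p.1 p.2) P =
        (Matrix.of fun i k : Fin (n+1) =>
          (((Matrix.of fun i j : Fin (n+1) => A i.succ j.succ) ^ (k : ℕ)) *ᵥ
            (fun i => A i.succ 0)) i).det := by
    intro A
    set φ : MvPolynomial σ ℂ →+* ℂ := (MvPolynomial.eval (fun p : σ => A p.1 p.2)) with hφ
    show φ _ = _
    rw [hP, RingHom.map_det]
    congr 1
    ext i k
    show φ (((Xp ^ (k : ℕ)) *ᵥ vp) i) = _
    have hmap : ∀ (M : Matrix (Fin (n+1)) (Fin (n+1)) (MvPolynomial σ ℂ))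
        (w : Fin (n+1) → MvPolynomial σ ℂ) (i : Fin (n+1)),
        φ ((M *ᵥ w) i) = ((M.map φ) *ᵥ (fun j => φ (w j))) i := by
      intro M w i
      simp [Matrix.mulVec, dotProduct, map_sum, _root_.map_mul]
    rw [hmap]
    have hpow : (Xp ^ (k : ℕ)).map φ = ((Xp.map φ) ^ (k : ℕ)) := by
      rw [← RingHom.mapMatrix_apply, ← RingHom.mapMatrix_apply, map_pow]
    rw [hpow]
    have hXeval : Xp.map φ = Matrix.of fun i j : Fin (n+1) => A i.succ j.succ := by
      ext i' j'
      simp [hXp, hφ, Matrix.map_apply]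
    have hveval : (fun j => φ (vp j)) = fun i : Fin (n+1) => A i.succ 0 := by
      funext j
      simp [hvp, hφ]
    rw [hXeval, hveval]
    rfl
  -- nonvanishing
  have hP0 : P ≠ 0 := by
    intro h0
    set A₀ : Fin (n+2) → Fin (n+2) → ℂ := fun i j => if (i : ℕ) = (j : ℕ) + 1 then 1 else 0
      with hA₀
    have := hevalP A₀
    rw [h0, map_zero] at this
    set S : Matrix (Fin (n+1)) (Fin (n+1)) ℂ :=
      Matrix.of fun i j : Fin (n+1) => A₀ i.succ j.succ with hS
    have hSentry : ∀ i j : Fin (n+1), S i j = if (i : ℕ) = (j : ℕ) + 1 then 1 else 0 := by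
      intro i j
      simp [hS, hA₀]
    have hv : (fun i : Fin (n+1) => A₀ i.succ 0) =
        fun i : Fin (n+1) => if (i : ℕ) = 0 then 1 else 0 := by
      funext i
      simp [hA₀]
    have hiter : ∀ k : ℕ, k ≤ n →
        (S ^ k) *ᵥ (fun i : Fin (n+1) => A₀ i.succ 0) =
          fun i : Fin (n+1) => if (i : ℕ) = k then 1 else 0 := by
      intro k
      induction k with
      | zero => intro _; rw [pow_zero, Matrix.one_mulVec, hv]
      | succ k ihk =>
        intro hk
        rw [pow_succ', ← Matrix.mulVec_mulVec, ihk (Nat.le_of_succ_le hk)]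
        funext i
        have hkn : k < n + 1 := by omega
        rw [Matrix.mulVec]
        show (dotProduct (S i) fun j : Fin (n+1) => if (j : ℕ) = k then 1 else 0) = _
        rw [dotProduct]
        rw [Finset.sum_eq_single (⟨k, hkn⟩ : Fin (n+1))]
        · simp [hSentry]
        · intro j _ hj
          have : (j : ℕ) ≠ k := fun h => hj (Fin.ext h)
          simp [this]
        · intro h; exact absurd (Finset.mem_univ _) h
    have hKid : (Matrix.of fun i k : Fin (n+1) =>
        ((S ^ (k : ℕ)) *ᵥ (fun i : Fin (n+1) => A₀ i.succ 0)) i) =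
          (1 : Matrix (Fin (n+1)) (Fin (n+1)) ℂ) := by
      ext i k
      rw [Matrix.of_apply, hiter (k : ℕ) (by omega)]
      by_cases hik : i = k
      · subst hik; simp
      · have : (i : ℕ) ≠ (k : ℕ) := fun h => hik (Fin.ext h)
        simp [this, Matrix.one_apply, hik]
    rw [hKid] at this
    simp at this
  -- inclusion into the zero set
  have hsub : {A : Fin (n+2) → Fin (n+2) → ℂ |
      ¬ (∃ v : Fin (n+1) → ℂ,
          IsCyclicVec (Matrix.of fun i j : Fin (n+1) => A i.succ j.succ) v) ∨
      ¬ IsCyclicVec (Matrix.of fun i j : Fin (n+1) => A i.succ j.succ)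
          (fun i => A i.succ 0)} ⊆
      {A : Fin (n+2) → Fin (n+2) → ℂ | MvPolynomial.eval (fun p : σ => A p.1 p.2) P = 0} := by
    intro A hA
    simp only [Set.mem_setOf_eq] at hA ⊢
    by_contra hne
    have hcyc : IsCyclicVec (Matrix.of fun i j : Fin (n+1) => A i.succ j.succ)
        (fun i => A i.succ 0) := by
      apply det_ne_zero_cyclic
      rw [← hevalP A]
      exact hne
    rcases hA with h | h
    · exact h ⟨_, hcyc⟩
    · exact h hcyc
  exact measure_mono_null hsub (grid_null (n+2) (n+2) P hP0)
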